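/- Let G be a finite connected undirected graph with positive conductances and marked vertex b, and let u,v be vertices distinct from b. Under the probability measure P on two-component spanning forests proportional to weight, the conditional probability that v lies in the floating component Σ given that u lies in Σ equals G_{u,v}/G_{u,u}. Equivalently, G_{u,u} times the weighted sum of 2SFs whose floating component contains both u and v equals G_{u,v} times the weighted sum of 2SFs whose floating component contains u. -/

import Mathlib

open scoped Classical BigOperators
set_option linter.unusedSectionVars false

noncomputable section

namespace TwoSF

variable {V : Type*} [Fintype V] [DecidableEq V]

/-- `u` and `v` are linked by the edges in `B`. -/
def Linked (B : Finset (Sym2 V)) : V → V → Prop :=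
  Relation.ReflTransGen fun a b => s(a, b) ∈ B

/-- The number of connected components of the spanning subgraph `(V, B)`. -/
def ncomp (B : Finset (Sym2 V)) : ℕ :=
  Nat.card (Quot (Linked B))

/-- `B` is a spanning forest of the complete graph on `V` with exactly `k`
connected components: it has `k` components and, by the rank count
`|B| + k = |V|`, it is acyclic (in particular it contains no loop edge).
Taking `k = 1` gives spanning trees, `k = 2` gives two-component spanning
forests (2SF). -/
def IsSF (k : ℕ) (B : Finset (Sym2 V)) : Prop :=
  ncomp B = k ∧ B.card + k = Fintype.card V

/-- The weight of an edge set: the product of its conductances. -/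
def wt (c : Sym2 V → ℝ) (B : Finset (Sym2 V)) : ℝ := ∏ e ∈ B, c e

/-- κ: the weighted sum of spanning trees.  Edge sets containing a non-edge
(an `e` with `c e = 0`) contribute weight `0`, so this is the weighted number
of spanning trees of the graph whose edges are the support of `c`. -/
def kappa1 (c : Sym2 V → ℝ) : ℝ := ∑ B ∈ Finset.univ.filter (IsSF 1), wt c B

/-- κ₂: the weighted sum of two-component spanning forests. -/
def kappa2 (c : Sym2 V → ℝ) : ℝ := ∑ B ∈ Finset.univ.filter (IsSF 2), wt c B

/-- The floating component of `B`: the set of vertices not linked to `b`. -/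
def floating (b : V) (B : Finset (Sym2 V)) : Finset V :=
  Finset.univ.filter fun v => ¬ Linked B b v

/-- The graph Laplacian `Δ` of the graph with conductances `c`. -/
def lap (c : Sym2 V → ℝ) : Matrix V V ℝ := fun u v =>
  if u = v then ∑ w ∈ Finset.univ.filter (· ≠ u), c s(u, w) else -c s(u, v)

/-- The Dirichlet Laplacian `Δ_D`, indexed by `V \ {b}`. -/
def dlap (c : Sym2 V → ℝ) (b : V) : Matrix {w : V // w ≠ b} {w : V // w ≠ b} ℝ :=
  Matrix.of fun p q => lap c p.1 q.1

/-- The Green function with Dirichlet boundary condition at `b` (the inverse of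
the Dirichlet Laplacian), with the convention that it vanishes as soon as one
of its arguments is `b`. -/
def green (c : Sym2 V → ℝ) (b : V) (u v : V) : ℝ :=
  if hu : u = b then 0 else if hv : v = b then 0 else (dlap c b)⁻¹ ⟨u, hu⟩ ⟨v, hv⟩

/-- The probability of the event `p` under the probability measure on
two-component spanning forests assigning to each 2SF a probability
proportional to its weight. -/
def pr2 (c : Sym2 V → ℝ) (p : Finset (Sym2 V) → Prop) : ℝ :=
  (∑ B ∈ Finset.univ.filter (fun B => IsSF 2 B ∧ p B), wt c B) / kappa2 c

/-- The expectation of `((floating b B).card : ℝ) ^ k`, i.e. of `|Σ|^k`, under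
the probability measure on two-component spanning forests proportional to
weight. -/
def expPow (c : Sym2 V → ℝ) (b : V) (k : ℕ) : ℝ :=
  (∑ B ∈ Finset.univ.filter (IsSF 2), wt c B * ((floating b B).card : ℝ) ^ k) / kappa2 c

/-- `|∂Σ|`: the sum of the conductances of the edges having exactly one
endpoint in the floating component of `B`. -/
def bdryWt (c : Sym2 V → ℝ) (b : V) (B : Finset (Sym2 V)) : ℝ :=
  ∑ u ∈ floating b B, ∑ v ∈ (floating b B)ᶜ, c s(u, v)

/-- The expectation of `|∂Σ|` under the probability measure on two-component
spanning forests proportional to weight. -/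
def expBdry (c : Sym2 V → ℝ) (b : V) : ℝ :=
  (∑ B ∈ Finset.univ.filter (IsSF 2), wt c B * bdryWt c b B) / kappa2 c

-- basics
lemma linked_refl (B : Finset (Sym2 V)) (a : V) : Linked B a a := Relation.ReflTransGen.refl

lemma linked_symm {B : Finset (Sym2 V)} {a b : V} (h : Linked B a b) : Linked B b a :=
  by
    haveI : Std.Symm (fun a b : V => s(a, b) ∈ B) := ⟨fun x y hxy => by rwa [Sym2.eq_swap] at hxy⟩
    exact (Relation.ReflTransGen.stdSymm (r := fun a b : V => s(a, b) ∈ B)).symm _ _ h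

lemma linked_trans {B : Finset (Sym2 V)} {a b c : V} (h : Linked B a b) (h' : Linked B b c) :
    Linked B a c := Relation.ReflTransGen.trans h h'

lemma linked_mono {B B' : Finset (Sym2 V)} (h : B ⊆ B') {a b : V} (hl : Linked B a b) :
    Linked B' a b := Relation.ReflTransGen.mono (fun _ _ hab => h hab) _ _ hl

lemma linked_of_mem {B : Finset (Sym2 V)} {x y : V} (h : s(x, y) ∈ B) : Linked B x y :=
  Relation.ReflTransGen.single h

lemma linked_insert_iff {B : Finset (Sym2 V)} {x y a b : V} :
    Linked (insert s(x, y) B) a b ↔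
      Linked B a b ∨ (Linked B a x ∧ Linked B y b) ∨ (Linked B a y ∧ Linked B x b) := by
  constructor
  · intro h
    induction h with
    | refl => exact Or.inl (linked_refl B a)
    | @tail m n hm hstep ih =>
      rcases Finset.mem_insert.mp hstep with hxy | hB
      · rw [Sym2.eq_iff] at hxy
        rcases ih with h1 | ⟨h1, h2⟩ | ⟨h1, h2⟩ <;> rcases hxy with ⟨rfl, rfl⟩ | ⟨rfl, rfl⟩
        · exact Or.inr (Or.inl ⟨h1, linked_refl B _⟩)
        · exact Or.inr (Or.inr ⟨h1, linked_refl B _⟩)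
        · exact Or.inr (Or.inl ⟨h1, linked_refl B _⟩)
        · exact Or.inl h1
        · exact Or.inl h1
        · exact Or.inr (Or.inr ⟨h1, linked_refl B _⟩)
      · rcases ih with h1 | ⟨h1, h2⟩ | ⟨h1, h2⟩
        · exact Or.inl (linked_trans h1 (linked_of_mem hB))
        · exact Or.inr (Or.inl ⟨h1, linked_trans h2 (linked_of_mem hB)⟩)
        · exact Or.inr (Or.inr ⟨h1, linked_trans h2 (linked_of_mem hB)⟩)
  · have hsub : B ⊆ insert s(x, y) B := Finset.subset_insert _ _
    have hedge : Linked (insert s(x, y) B) x y :=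
      linked_of_mem (Finset.mem_insert_self _ _)
    rintro (h | ⟨h1, h2⟩ | ⟨h1, h2⟩)
    · exact linked_mono hsub h
    · exact linked_trans (linked_trans (linked_mono hsub h1) hedge) (linked_mono hsub h2)
    · exact linked_trans (linked_trans (linked_mono hsub h1) (linked_symm hedge))
        (linked_mono hsub h2)

lemma eqvGen_linked {B : Finset (Sym2 V)} {a b : V} (h : Relation.EqvGen (Linked B) a b) :
    Linked B a b := by
  induction h with
  | rel _ _ h => exact h
  | refl => exact linked_refl B _
  | symm _ _ _ ih => exact linked_symm ih
  | trans _ _ _ _ _ ih1 ih2 => exact linked_trans ih1 ih2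

lemma quot_mk_eq_iff {B : Finset (Sym2 V)} {a b : V} :
    Quot.mk (Linked B) a = Quot.mk (Linked B) b ↔ Linked B a b := by
  constructor
  · intro h
    exact eqvGen_linked (Quot.eq.mp h)
  · exact Quot.sound

-- connected components as finsets
def cc (B : Finset (Sym2 V)) (v : V) : Finset V := Finset.univ.filter (Linked B v)

lemma mem_cc {B : Finset (Sym2 V)} {v w : V} : w ∈ cc B v ↔ Linked B v w := by
  simp [cc]

lemma cc_self {B : Finset (Sym2 V)} (v : V) : v ∈ cc B v := mem_cc.mpr (linked_refl B v)

lemma cc_eq_iff {B : Finset (Sym2 V)} {v w : V} : cc B v = cc B w ↔ Linked B v w := by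
  constructor
  · intro h
    have : w ∈ cc B v := h ▸ cc_self w
    exact mem_cc.mp this
  · intro h
    ext z
    simp only [mem_cc]
    exact ⟨fun hz => linked_trans (linked_symm h) hz, fun hz => linked_trans h hz⟩

lemma ncomp_eq_card_image (B : Finset (Sym2 V)) :
    ncomp B = (Finset.univ.image (cc B)).card := by
  have hf : ∀ (a b : V), Linked B a b → cc B a = cc B b := fun a b h => cc_eq_iff.mpr h
  let f : Quot (Linked B) → {s // s ∈ Finset.univ.image (cc B)} :=
    Quot.lift (fun v => ⟨cc B v, Finset.mem_image_of_mem _ (Finset.mem_univ v)⟩)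
      (fun a b h => Subtype.ext (hf a b h))
  have hbij : Function.Bijective f := by
    constructor
    · intro q1 q2
      induction q1 using Quot.ind with | _ a =>
      induction q2 using Quot.ind with | _ b =>
      intro h
      have : cc B a = cc B b := by simpa [f] using h
      exact Quot.sound (cc_eq_iff.mp this)
    · rintro ⟨s, hs⟩
      obtain ⟨v, _, rfl⟩ := Finset.mem_image.mp hs
      exact ⟨Quot.mk _ v, rfl⟩
  rw [ncomp, Nat.card_eq_of_bijective f hbij, Nat.card_eq_finsetCard]

lemma ncomp_eq_one_linked {B : Finset (Sym2 V)} (h : ncomp B = 1) (a b : V) : Linked B a b := by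
  have : Nat.card (Quot (Linked B)) = 1 := h
  rw [Nat.card_eq_one_iff_unique] at this
  exact quot_mk_eq_iff.mp (this.1.elim (Quot.mk _ a) (Quot.mk _ b))

lemma linked_of_ncomp_two {B : Finset (Sym2 V)} (h : ncomp B = 2) {b x y : V}
    (hx : ¬ Linked B b x) (hy : ¬ Linked B b y) : Linked B x y := by
  have h2 : Nat.card (Quot (Linked B)) = 2 := h
  obtain ⟨p, q, hpq, huniv⟩ := Nat.card_eq_two_iff.mp h2
  have hmem : ∀ z : Quot (Linked B), z = p ∨ z = q := by
    intro z
    have : z ∈ ({p, q} : Set (Quot (Linked B))) := huniv ▸ Set.mem_univ z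
    simpa using this
  have hbx : Quot.mk (Linked B) b ≠ Quot.mk (Linked B) x := fun hc => hx (quot_mk_eq_iff.mp hc)
  have hby : Quot.mk (Linked B) b ≠ Quot.mk (Linked B) y := fun hc => hy (quot_mk_eq_iff.mp hc)
  have : Quot.mk (Linked B) x = Quot.mk (Linked B) y := by
    rcases hmem (Quot.mk (Linked B) b) with hb | hb <;>
      rcases hmem (Quot.mk (Linked B) x) with hx' | hx' <;>
      rcases hmem (Quot.mk (Linked B) y) with hy' | hy' <;>
      simp_all
  exact quot_mk_eq_iff.mp this

-- F1: inserting an edge between linked vertices does not change Linked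
lemma linked_insert_of_linked {B : Finset (Sym2 V)} {x y : V} (h : Linked B x y) :
    Linked (insert s(x, y) B) = Linked B := by
  funext a b
  ext
  rw [linked_insert_iff]
  constructor
  · rintro (h1 | ⟨h1, h2⟩ | ⟨h1, h2⟩)
    · exact h1
    · exact linked_trans (linked_trans h1 h) h2
    · exact linked_trans (linked_trans h1 (linked_symm h)) h2
  · exact Or.inl

lemma ncomp_insert_of_linked {B : Finset (Sym2 V)} {x y : V} (h : Linked B x y) :
    ncomp (insert s(x, y) B) = ncomp B := by
  unfold ncomp
  rw [linked_insert_of_linked h]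

-- F2: inserting an edge between unlinked vertices decreases ncomp by one
lemma ncomp_insert_of_not_linked {B : Finset (Sym2 V)} {x y : V} (h : ¬ Linked B x y) :
    ncomp (insert s(x, y) B) + 1 = ncomp B := by
  have hxy : x ≠ y := fun hc => h (hc ▸ linked_refl B x)
  set B' := insert s(x, y) B with hB'
  have key : ∀ v : V, cc B' v =
      if Linked B v x ∨ Linked B v y then cc B x ∪ cc B y else cc B v := by
    intro v
    ext z
    rw [hB']
    simp only [mem_cc, linked_insert_iff]
    split_ifs with hv
    · simp only [Finset.mem_union, mem_cc]
      constructor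
      · rintro (h1 | ⟨h1, h2⟩ | ⟨h1, h2⟩)
        · rcases hv with hvx | hvy
          · exact Or.inl (linked_trans (linked_symm hvx) h1)
          · exact Or.inr (linked_trans (linked_symm hvy) h1)
        · exact Or.inr h2
        · exact Or.inl h2
      · rintro (h1 | h1)
        · rcases hv with hvx | hvy
          · exact Or.inl (linked_trans hvx h1)
          · exact Or.inr (Or.inr ⟨hvy, h1⟩)
        · rcases hv with hvx | hvy
          · exact Or.inr (Or.inl ⟨hvx, h1⟩)
          · exact Or.inl (linked_trans hvy h1)
    · push_neg at hv
      simp only [mem_cc]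
      constructor
      · rintro (h1 | ⟨h1, h2⟩ | ⟨h1, h2⟩)
        · exact h1
        · exact absurd h1 hv.1
        · exact absurd h1 hv.2
      · exact Or.inl
  have hccx : cc B' x = cc B x ∪ cc B y := by
    rw [key x, if_pos (Or.inl (linked_refl B x))]
  set S := Finset.univ.image (cc B) with hS
  set S' := Finset.univ.image (cc B') with hS'
  have hxS : cc B x ∈ S := Finset.mem_image_of_mem _ (Finset.mem_univ x)
  have hyS : cc B y ∈ S := Finset.mem_image_of_mem _ (Finset.mem_univ y)
  have hne : cc B x ≠ cc B y := fun hc => h (cc_eq_iff.mp hc)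
  have hunion_not : cc B x ∪ cc B y ∉ S := by
    intro hc
    obtain ⟨v, _, hv⟩ := Finset.mem_image.mp hc
    have hvx : Linked B v x := mem_cc.mp (hv ▸ (Finset.mem_union_left _ (cc_self x)))
    have hvy : Linked B v y := mem_cc.mp (hv ▸ (Finset.mem_union_right _ (cc_self y)))
    exact h (linked_trans (linked_symm hvx) hvy)
  have hSeq : S' = insert (cc B x ∪ cc B y) ((S.erase (cc B x)).erase (cc B y)) := by
    ext s
    simp only [hS', Finset.mem_image, Finset.mem_insert, Finset.mem_erase]
    constructor
    · rintro ⟨v, _, rfl⟩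
      rw [key v]
      split_ifs with hv
      · exact Or.inl rfl
      · push_neg at hv
        refine Or.inr ⟨fun hc => hv.2 (cc_eq_iff.mp hc), fun hc => hv.1 (cc_eq_iff.mp hc),
          Finset.mem_image_of_mem _ (Finset.mem_univ v)⟩
    · rintro (rfl | ⟨hsy, hsx, hsS⟩)
      · exact ⟨x, Finset.mem_univ x, hccx⟩
      · obtain ⟨v, _, rfl⟩ := Finset.mem_image.mp hsS
        refine ⟨v, Finset.mem_univ v, ?_⟩
        rw [key v, if_neg]
        push_neg
        exact ⟨fun hc => hsx (cc_eq_iff.mpr hc), fun hc => hsy (cc_eq_iff.mpr hc)⟩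
  have hcard2 : 2 ≤ S.card := Finset.one_lt_card.mpr ⟨cc B x, hxS, cc B y, hyS, hne⟩
  rw [ncomp_eq_card_image, ncomp_eq_card_image, ← hS, ← hS', hSeq]
  rw [Finset.card_insert_of_notMem (by
    intro hc
    exact hunion_not (Finset.mem_of_mem_erase (Finset.mem_of_mem_erase hc)))]
  rw [Finset.card_erase_of_mem (Finset.mem_erase.mpr ⟨Ne.symm hne, hyS⟩),
    Finset.card_erase_of_mem hxS]
  omega

lemma ncomp_empty : ncomp (∅ : Finset (Sym2 V)) = Fintype.card V := by
  have : ∀ a b : V, Linked ∅ a b ↔ a = b := by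
    intro a b
    constructor
    · intro h
      induction h with
      | refl => rfl
      | tail _ hstep ih => simp at hstep
    · rintro rfl; exact linked_refl _ _
  rw [ncomp_eq_card_image]
  have hcc : ∀ v : V, cc (∅ : Finset (Sym2 V)) v = {v} := by
    intro v
    ext z
    simp [mem_cc, this, eq_comm]
  have : Finset.univ.image (cc (∅ : Finset (Sym2 V))) = Finset.univ.image (fun v : V => {v}) := by
    apply Finset.image_congr
    intro v _
    exact hcc v
  rw [this, Finset.card_image_of_injective _ (fun a b h => by simpa using h)]
  simp

-- rank inequality
lemma le_ncomp_add_card (B : Finset (Sym2 V)) : Fintype.card V ≤ ncomp B + B.card := by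
  induction B using Finset.induction_on with
  | empty => simp [ncomp_empty]
  | @insert e B he ih =>
    induction e using Sym2.ind with | _ x y =>
    rw [Finset.card_insert_of_notMem he]
    by_cases h : Linked B x y
    · rw [ncomp_insert_of_linked h]; omega
    · have := ncomp_insert_of_not_linked h; omega

def Forest (B : Finset (Sym2 V)) : Prop := ncomp B + B.card = Fintype.card V

lemma forest_no_loop {B : Finset (Sym2 V)} (hB : Forest B) {x : V} : s(x, x) ∉ B := by
  intro hc
  have hB' : B = insert s(x, x) (B.erase s(x, x)) := by
    rw [Finset.insert_erase hc]
  have h1 : ncomp B = ncomp (B.erase s(x, x)) := by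
    conv_lhs => rw [hB']
    exact ncomp_insert_of_linked (linked_refl _ x)
  have h2 := le_ncomp_add_card (B.erase s(x, x))
  have h3 : (B.erase s(x, x)).card + 1 = B.card := by
    rw [Finset.card_erase_of_mem hc]
    have : 0 < B.card := Finset.card_pos.mpr ⟨_, hc⟩
    omega
  unfold Forest at hB
  omega

lemma forest_erase {B : Finset (Sym2 V)} (hB : Forest B) {x y : V} (he : s(x, y) ∈ B) :
    ¬ Linked (B.erase s(x, y)) x y ∧ Forest (B.erase s(x, y)) ∧
      ncomp (B.erase s(x, y)) = ncomp B + 1 := by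
  have hxy : x ≠ y := by
    intro rfl'
    exact forest_no_loop hB (rfl' ▸ he)
  have hins : B = insert s(x, y) (B.erase s(x, y)) := (Finset.insert_erase he).symm
  have hcard : (B.erase s(x, y)).card + 1 = B.card := by
    rw [Finset.card_erase_of_mem he]
    have : 0 < B.card := Finset.card_pos.mpr ⟨_, he⟩
    omega
  have hnl : ¬ Linked (B.erase s(x, y)) x y := by
    intro hc
    have h1 : ncomp B = ncomp (B.erase s(x, y)) := by
      conv_lhs => rw [hins]
      exact ncomp_insert_of_linked hc
    have h2 := le_ncomp_add_card (B.erase s(x, y))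
    unfold Forest at hB
    omega
  have hnc : ncomp (B.erase s(x, y)) = ncomp B + 1 := by
    have := ncomp_insert_of_not_linked hnl
    rw [← hins] at this
    omega
  refine ⟨hnl, ?_, hnc⟩
  unfold Forest at hB ⊢
  omega

lemma forest_insert {B : Finset (Sym2 V)} (hB : Forest B) {x y : V}
    (h : ¬ Linked B x y) : Forest (insert s(x, y) B) ∧
      ncomp (insert s(x, y) B) + 1 = ncomp B := by
  have hne : s(x, y) ∉ B := fun hc => h (linked_of_mem hc)
  have hcard : (insert s(x, y) B).card = B.card + 1 := Finset.card_insert_of_notMem hne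
  have hnc := ncomp_insert_of_not_linked h
  exact ⟨by unfold Forest at hB ⊢; omega, hnc⟩

lemma isSF_iff_forest {B : Finset (Sym2 V)} {k : ℕ} :
    IsSF k B ↔ Forest B ∧ ncomp B = k := by
  unfold IsSF Forest
  constructor
  · rintro ⟨h1, h2⟩; omega
  · rintro ⟨h1, h2⟩; omega


lemma linked_empty {a b : V} : Linked (∅ : Finset (Sym2 V)) a b ↔ a = b := by
  constructor
  · intro h
    induction h with
    | refl => rfl
    | tail _ hstep ih => simp at hstep
  · rintro rfl; exact linked_refl _ _

lemma linked_escape {E F : Finset (Sym2 V)} {b : V} {w : V} (hE : Linked E w b)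
    (hF : ¬ Linked F w b) : ∃ x y, s(x, y) ∈ E ∧ Linked F w x ∧ ¬ Linked F w y := by
  induction hE using Relation.ReflTransGen.head_induction_on with
  | refl => exact absurd (linked_refl F b) hF
  | @head a c hstep htail ih =>
    by_cases hac : Linked F a c
    · have hcb : ¬ Linked F c b := fun hc => hF (linked_trans hac hc)
      obtain ⟨x, y, hxy, h1, h2⟩ := ih hcb
      exact ⟨x, y, hxy, linked_trans hac h1, fun hc => h2 (linked_trans (linked_symm hac) hc)⟩
    · exact ⟨a, c, hstep, linked_refl F a, hac⟩

lemma exists_good_2sf (E : Finset (Sym2 V)) (hE : ncomp E = 1) {b u : V} (hu : u ≠ b) :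
    ∃ F, F ⊆ E ∧ IsSF 2 F ∧ ¬ Linked F b u := by
  classical
  set C := Finset.univ.filter
    (fun F : Finset (Sym2 V) => F ⊆ E ∧ Forest F ∧ ¬ Linked F b u) with hC
  have hne : (∅ : Finset (Sym2 V)) ∈ C := by
    rw [hC, Finset.mem_filter]
    refine ⟨Finset.mem_univ _, Finset.empty_subset _, ?_, ?_⟩
    · unfold Forest; simp [ncomp_empty]
    · rw [linked_empty]; exact fun hc => hu hc.symm
  obtain ⟨F, hFC, hmax⟩ := Finset.exists_max_image C Finset.card ⟨∅, hne⟩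
  rw [hC, Finset.mem_filter] at hFC
  obtain ⟨-, hFE, hFor, hFbu⟩ := hFC
  have key : ∀ v : V, Linked F v b ∨ Linked F v u := by
    intro v
    by_contra hcon
    push_neg at hcon
    obtain ⟨hvb, hvu⟩ := hcon
    have hvE : Linked E v b := ncomp_eq_one_linked hE v b
    obtain ⟨x, y, hxyE, hvx, hvy⟩ := linked_escape hvE hvb
    have hnxy : ¬ Linked F x y := fun hc => hvy (linked_trans hvx hc)
    have hF' : Forest (insert s(x, y) F) := (forest_insert hFor hnxy).1
    have hsub : insert s(x, y) F ⊆ E := Finset.insert_subset hxyE hFE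
    have hnb : ¬ Linked (insert s(x, y) F) b u := by
      intro hcon2
      rcases linked_insert_iff.mp hcon2 with h1 | ⟨h1, h2⟩ | ⟨h1, h2⟩
      · exact hFbu h1
      · exact hvb (linked_trans hvx (linked_symm h1))
      · exact hvu (linked_trans hvx h2)
    have hmem : insert s(x, y) F ∈ C := by
      rw [hC, Finset.mem_filter]
      exact ⟨Finset.mem_univ _, hsub, hF', hnb⟩
    have hcard : F.card < (insert s(x, y) F).card := by
      rw [Finset.card_insert_of_notMem (fun hc => hnxy (linked_of_mem hc))]
      omega
    exact absurd (hmax _ hmem) (by omega)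
  have himg : Finset.univ.image (cc F) = {cc F b, cc F u} := by
    ext s
    simp only [Finset.mem_image, Finset.mem_insert, Finset.mem_singleton]
    constructor
    · rintro ⟨v, -, rfl⟩
      rcases key v with h | h
      · exact Or.inl (cc_eq_iff.mpr h)
      · exact Or.inr (cc_eq_iff.mpr h)
    · rintro (rfl | rfl)
      · exact ⟨b, Finset.mem_univ b, rfl⟩
      · exact ⟨u, Finset.mem_univ u, rfl⟩
  have hcc_ne : cc F b ≠ cc F u := fun hc => hFbu (cc_eq_iff.mp hc)
  have hnc : ncomp F = 2 := by
    rw [ncomp_eq_card_image, himg, Finset.card_pair hcc_ne]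
  exact ⟨F, hFE, isSF_iff_forest.mpr ⟨hFor, hnc⟩, hFbu⟩

lemma forest_exists_dir {w u : V} (hwu : w ≠ u) :
    ∀ T : Finset (Sym2 V), Forest T → Linked T w u →
      ∃ y, s(w, y) ∈ T ∧ Linked (T.erase s(w, y)) y u := by
  intro T
  induction T using Finset.strongInductionOn with
  | _ T ih =>
    intro hT hlink
    obtain (rfl | ⟨z, hz, hzu⟩) := Relation.ReflTransGen.cases_head hlink
    · exact absurd rfl hwu
    · have hz' : s(w, z) ∈ T := hz
      have hzu' : Linked (insert s(w, z) (T.erase s(w, z))) z u := by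
        rwa [Finset.insert_erase hz']
      rcases linked_insert_iff.mp hzu' with h1 | ⟨h1, h2⟩ | ⟨h1, h2⟩
      · exact ⟨z, hz', h1⟩
      · exact ⟨z, hz', h2⟩
      · have hT' : Forest (T.erase s(w, z)) := (forest_erase hT hz').2.1
        obtain ⟨y, hy, hyl⟩ := ih _ (Finset.erase_ssubset hz') hT' h2
        exact ⟨y, Finset.mem_of_mem_erase hy,
          linked_mono (Finset.erase_subset_erase _ (Finset.erase_subset _ _)) hyl⟩

lemma forest_dir_unique {T : Finset (Sym2 V)} (hT : Forest T) {w u y₁ y₂ : V}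
    (h1 : s(w, y₁) ∈ T) (l1 : Linked (T.erase s(w, y₁)) y₁ u)
    (h2 : s(w, y₂) ∈ T) (l2 : Linked (T.erase s(w, y₂)) y₂ u) : y₁ = y₂ := by
  by_contra hne
  have hwy1 : w ≠ y₁ := fun hc => forest_no_loop hT (hc ▸ h1)
  have hwy2 : w ≠ y₂ := fun hc => forest_no_loop hT (hc ▸ h2)
  have hee : s(w, y₁) ≠ s(w, y₂) := by
    rw [Ne, Sym2.eq_iff]
    rintro (⟨-, rfl⟩ | ⟨rfl, h⟩)
    · exact hne rfl
    · exact hwy1 h.symm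
  have f1 := (forest_erase hT h1).1
  have f2 := (forest_erase hT h2).1
  have hmem : s(w, y₁) ∈ T.erase s(w, y₂) := Finset.mem_erase.mpr ⟨hee, h1⟩
  have l2' : Linked (insert s(w, y₁) ((T.erase s(w, y₂)).erase s(w, y₁))) y₂ u := by
    rwa [Finset.insert_erase hmem]
  have hsub1 : (T.erase s(w, y₂)).erase s(w, y₁) ⊆ T.erase s(w, y₁) :=
    Finset.erase_subset_erase _ (Finset.erase_subset _ _)
  have hsub2 : (T.erase s(w, y₂)).erase s(w, y₁) ⊆ T.erase s(w, y₂) :=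
    Finset.erase_subset _ _
  rcases linked_insert_iff.mp l2' with g | ⟨g1, g2⟩ | ⟨g1, g2⟩
  · have hy2u : Linked (T.erase s(w, y₁)) y₂ u := linked_mono hsub1 g
    have he2 : s(w, y₂) ∈ T.erase s(w, y₁) := Finset.mem_erase.mpr ⟨hee.symm, h2⟩
    exact f1 (linked_trans (linked_trans (linked_of_mem he2) hy2u) (linked_symm l1))
  · exact f2 (linked_symm (linked_mono hsub2 g1))
  · exact f1 (linked_trans (linked_mono hsub1 g2) (linked_symm l1))

lemma forest_dir {T : Finset (Sym2 V)} (hT : Forest T) {w u : V} (hwu : w ≠ u)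
    (h : Linked T w u) :
    ∃! y, s(w, y) ∈ T ∧ Linked (T.erase s(w, y)) y u := by
  obtain ⟨y, hy1, hy2⟩ := forest_exists_dir hwu T hT h
  exact ⟨y, ⟨hy1, hy2⟩, fun y' hy' => forest_dir_unique hT hy'.1 hy'.2 hy1 hy2⟩

lemma wt_nonneg {c : Sym2 V → ℝ} (hc : ∀ e, 0 ≤ c e) (B : Finset (Sym2 V)) : 0 ≤ wt c B :=
  Finset.prod_nonneg fun e _ => hc e

lemma wt_pos {c : Sym2 V → ℝ} (hc : ∀ e, 0 ≤ c e) {B : Finset (Sym2 V)}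
    (hB : B ⊆ Finset.univ.filter fun e : Sym2 V => c e ≠ 0) : 0 < wt c B := by
  apply Finset.prod_pos
  intro e he
  have := hB he
  rw [Finset.mem_filter] at this
  exact (hc e).lt_of_ne' this.2

/-- The unique neighbour of `w` in direction of `t` (junk value if none). -/
def dirStep (t w : V) (T : Finset (Sym2 V)) : V :=
  if h : ∃ y, s(w, y) ∈ T ∧ Linked (T.erase s(w, y)) y t then h.choose else t

lemma dirStep_spec {t w : V} {T : Finset (Sym2 V)}
    (h : ∃ y, s(w, y) ∈ T ∧ Linked (T.erase s(w, y)) y t) :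
    s(w, dirStep t w T) ∈ T ∧ Linked (T.erase s(w, dirStep t w T)) (dirStep t w T) t := by
  rw [dirStep, dif_pos h]
  exact h.choose_spec

lemma dirStep_eq {t w y : V} {T : Finset (Sym2 V)} (hT : Forest T) (hy : s(w, y) ∈ T)
    (hl : Linked (T.erase s(w, y)) y t) : dirStep t w T = y := by
  obtain ⟨h1, h2⟩ := dirStep_spec ⟨y, hy, hl⟩
  exact forest_dir_unique hT h1 h2 hy hl

/-- The edge-swap map used in the harmonicity bijection. -/
def phi (t w : V) (p : Finset (Sym2 V) × V) : Finset (Sym2 V) × V :=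
  ((insert s(w, p.2) p.1).erase s(w, dirStep t w (insert s(w, p.2) p.1)),
    dirStep t w (insert s(w, p.2) p.1))

lemma stepA (c : Sym2 V → ℝ) {b u w : V} (hub : u ≠ b) (hwb : w ≠ b) (hwu : w ≠ u)
    {F : Finset (Sym2 V)} {z : V} (hF : IsSF 2 F) (hbu : ¬ Linked F b u)
    (hbw : ¬ Linked F b w) (hbz : Linked F b z) :
    IsSF 2 (phi u w (F, z)).1 ∧ ¬ Linked (phi u w (F, z)).1 b u ∧
      ¬ Linked (phi u w (F, z)).1 b (phi u w (F, z)).2 ∧ Linked (phi u w (F, z)).1 b w ∧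
      phi b w (phi u w (F, z)) = (F, z) ∧
      wt c (phi u w (F, z)).1 * c s(w, (phi u w (F, z)).2) = wt c F * c s(w, z) := by
  obtain ⟨hForF, hncF⟩ := isSF_iff_forest.mp hF
  have hwz : w ≠ z := fun hc => hbw (hc ▸ hbz)
  have hnwz : ¬ Linked F w z := fun hc => hbw (linked_trans hbz (linked_symm hc))
  have hzF : s(w, z) ∉ F := fun hc => hnwz (linked_of_mem hc)
  set T := insert s(w, z) F with hTdef
  have hFsubT : F ⊆ T := Finset.subset_insert _ _
  obtain ⟨hForT, hncT'⟩ := forest_insert hForF hnwz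
  rw [← hTdef] at hForT hncT'
  have hncT : ncomp T = 1 := by omega
  have hlinkTwu : Linked T w u := ncomp_eq_one_linked hncT w u
  set y := dirStep u w T with hydef
  obtain ⟨hyT, hly⟩ := dirStep_spec (t := u) (w := w) (T := T)
    (forest_exists_dir hwu T hForT hlinkTwu)
  rw [← hydef] at hyT hly
  have hTzF : T.erase s(w, z) = F := Finset.erase_insert hzF
  have hyz : y ≠ z := by
    intro hc
    rw [hc, hTzF] at hly
    exact hbu (linked_trans hbz hly)
  have hwy : w ≠ y := fun hc => forest_no_loop hForT (hc ▸ hyT)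
  have heyz : s(w, y) ≠ s(w, z) := by
    rw [Ne, Sym2.eq_iff]
    rintro (⟨-, h⟩ | ⟨h, -⟩)
    · exact hyz h
    · exact hwz h
  have hyF : s(w, y) ∈ F := by
    rcases Finset.mem_insert.mp hyT with h | h
    · exact absurd h heyz
    · exact h
  set F' := T.erase s(w, y) with hF'def
  have hfT : ¬ Linked (T.erase s(w, y)) w y := (forest_erase hForT hyT).1
  obtain ⟨-, hForF', hncF'⟩ := forest_erase hForT hyT
  have hncF'2 : ncomp F' = 2 := by rw [hF'def, hncF', hncT]
  have hSF' : IsSF 2 F' := isSF_iff_forest.mpr ⟨hForF', hncF'2⟩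
  set B0 := F.erase s(w, y) with hB0def
  have hF'eq : F' = insert s(w, z) B0 := by
    rw [hF'def, hTdef, hB0def, Finset.erase_insert_of_ne (Ne.symm heyz)]
  have hB0F : B0 ⊆ F := Finset.erase_subset _ _
  have hB0T' : B0 ⊆ T.erase s(w, y) := Finset.erase_subset_erase _ hFsubT
  have hFeq : F = insert s(w, y) B0 := (Finset.insert_erase hyF).symm
  -- ¬ Linked F' b u
  have hbu' : ¬ Linked F' b u := by
    rw [hF'eq]
    intro hc
    rcases linked_insert_iff.mp hc with h1 | ⟨h1, h2⟩ | ⟨h1, h2⟩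
    · exact hbu (linked_mono hB0F h1)
    · exact hbw (linked_mono hB0F h1)
    · exact hfT (linked_trans (linked_mono hB0T' h2) (linked_symm hly))
  -- ¬ Linked F' b y
  have hby' : ¬ Linked F' b y := by
    rw [hF'eq]
    intro hc
    rcases linked_insert_iff.mp hc with h1 | ⟨h1, h2⟩ | ⟨h1, h2⟩
    · exact hbw (linked_trans (linked_mono hB0F h1) (linked_symm (linked_of_mem hyF)))
    · exact hbw (linked_mono hB0F h1)
    · exact hfT (linked_mono hB0T' h2)
  -- Linked F' b w
  have hbw' : Linked F' b w := by
    have hc := hbz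
    rw [hFeq] at hc
    have hB0F' : B0 ⊆ F' := hF'eq ▸ Finset.subset_insert _ _
    rcases linked_insert_iff.mp hc with h1 | ⟨h1, h2⟩ | ⟨h1, h2⟩
    · exact linked_trans (linked_mono hB0F' h1)
        (linked_symm (linked_of_mem (hF'eq ▸ Finset.mem_insert_self _ _)))
    · exact linked_mono hB0F' h1
    · exact absurd (linked_trans (linked_mono hB0F h1)
        (linked_symm (linked_of_mem hyF))) hbw
  -- unfold phi
  have hphi : phi u w (F, z) = (F', y) := by
    simp only [phi, hF'def, hydef, hTdef]
  -- roundtrip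
  have hins : insert s(w, y) F' = T := Finset.insert_erase hyT
  have hdirb : dirStep b w T = z := by
    apply dirStep_eq hForT (Finset.mem_insert_self _ _)
    rw [hTzF]
    exact linked_symm hbz
  have hround : phi b w (F', y) = (F, z) := by
    simp only [phi]
    rw [hins, hdirb, hTzF]
  -- weights
  have hyF' : s(w, y) ∉ F' := Finset.notMem_erase _ _
  have hwtT1 : wt c T = c s(w, z) * wt c F := by
    rw [hTdef, wt, Finset.prod_insert hzF]; rfl
  have hwtT2 : wt c T = c s(w, y) * wt c F' := by
    conv_lhs => rw [← hins]
    rw [wt, Finset.prod_insert hyF']; rfl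
  refine ⟨?_, ?_, ?_, ?_, ?_, ?_⟩
  · rw [hphi]; exact hSF'
  · rw [hphi]; exact hbu'
  · rw [hphi]; exact hby'
  · rw [hphi]; exact hbw'
  · rw [hphi]; exact hround
  · rw [hphi]
    have : c s(w, y) * wt c F' = c s(w, z) * wt c F := by rw [← hwtT2, ← hwtT1]
    dsimp only
    linarith [this]

lemma stepB (c : Sym2 V → ℝ) {b u w : V} (hub : u ≠ b) (hwb : w ≠ b) (hwu : w ≠ u)
    {F' : Finset (Sym2 V)} {y : V} (hF' : IsSF 2 F') (hbu' : ¬ Linked F' b u)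
    (hby' : ¬ Linked F' b y) (hbw' : Linked F' b w) :
    IsSF 2 (phi b w (F', y)).1 ∧ ¬ Linked (phi b w (F', y)).1 b u ∧
      ¬ Linked (phi b w (F', y)).1 b w ∧ Linked (phi b w (F', y)).1 b (phi b w (F', y)).2 ∧
      phi u w (phi b w (F', y)) = (F', y) ∧
      wt c (phi b w (F', y)).1 * c s(w, (phi b w (F', y)).2) = wt c F' * c s(w, y) := by
  obtain ⟨hForF', hncF'⟩ := isSF_iff_forest.mp hF'
  have hwy : w ≠ y := fun hc => hby' (hc ▸ hbw')
  have hnwy : ¬ Linked F' w y := fun hc => hby' (linked_trans hbw' hc)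
  have hyF' : s(w, y) ∉ F' := fun hc => hnwy (linked_of_mem hc)
  set T := insert s(w, y) F' with hTdef
  have hFsubT : F' ⊆ T := Finset.subset_insert _ _
  obtain ⟨hForT, hncT'⟩ := forest_insert hForF' hnwy
  rw [← hTdef] at hForT hncT'
  have hncT : ncomp T = 1 := by omega
  have hlinkTwb : Linked T w b := ncomp_eq_one_linked hncT w b
  set z := dirStep b w T with hzdef
  obtain ⟨hzT, hlz⟩ := dirStep_spec (t := b) (w := w) (T := T)
    (forest_exists_dir hwb T hForT hlinkTwb)
  rw [← hzdef] at hzT hlz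
  have hTyF : T.erase s(w, y) = F' := Finset.erase_insert hyF'
  have hzy : z ≠ y := by
    intro hc
    rw [hc, hTyF] at hlz
    exact hby' (linked_symm hlz)
  have hwz : w ≠ z := fun hc => forest_no_loop hForT (hc ▸ hzT)
  have heyz : s(w, z) ≠ s(w, y) := by
    rw [Ne, Sym2.eq_iff]
    rintro (⟨-, h⟩ | ⟨h, -⟩)
    · exact hzy h
    · exact hwy h
  have hzF : s(w, z) ∈ F' := by
    rcases Finset.mem_insert.mp hzT with h | h
    · exact absurd h heyz
    · exact h
  set F := T.erase s(w, z) with hFdef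
  have hfT : ¬ Linked (T.erase s(w, z)) w z := (forest_erase hForT hzT).1
  obtain ⟨-, hForF, hncF⟩ := forest_erase hForT hzT
  have hncF2 : ncomp F = 2 := by rw [hFdef, hncF, hncT]
  have hSF : IsSF 2 F := isSF_iff_forest.mpr ⟨hForF, hncF2⟩
  set B0 := F'.erase s(w, z) with hB0def
  have hFeq : F = insert s(w, y) B0 := by
    rw [hFdef, hTdef, hB0def, Finset.erase_insert_of_ne (Ne.symm heyz)]
  have hB0F : B0 ⊆ F' := Finset.erase_subset _ _
  have hB0T' : B0 ⊆ T.erase s(w, z) := Finset.erase_subset_erase _ hFsubT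
  have hbw_contra : ¬ Linked B0 b w := by
    intro hc
    have h1 : Linked (T.erase s(w, z)) b w := linked_mono hB0T' hc
    have h2 : Linked (T.erase s(w, z)) b z := linked_symm (hFdef ▸ hlz)
    exact hfT (linked_trans (linked_symm h1) h2)
  -- ¬ Linked F b u
  have hbuF : ¬ Linked F b u := by
    rw [hFeq]
    intro hc
    rcases linked_insert_iff.mp hc with h1 | ⟨h1, h2⟩ | ⟨h1, h2⟩
    · exact hbu' (linked_mono hB0F h1)
    · exact hbw_contra h1
    · exact hby' (linked_mono hB0F h1)
  -- ¬ Linked F b w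
  have hbwF : ¬ Linked F b w := by
    rw [hFeq]
    intro hc
    rcases linked_insert_iff.mp hc with h1 | ⟨h1, h2⟩ | ⟨h1, h2⟩
    · exact hbw_contra h1
    · exact hbw_contra h1
    · exact hby' (linked_mono hB0F h1)
  -- Linked F b z
  have hbzF : Linked F b z := by
    rw [hFdef]
    exact linked_symm hlz
  -- unfold phi
  have hphi : phi b w (F', y) = (F, z) := by
    simp only [phi, hFdef, hzdef, hTdef]
  -- roundtrip
  have hins : insert s(w, z) F = T := Finset.insert_erase hzT
  have hlyu : Linked F' y u := linked_of_ncomp_two hncF' hby' hbu'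
  have hdiru : dirStep u w T = y := by
    apply dirStep_eq hForT (Finset.mem_insert_self _ _)
    rw [hTyF]
    exact hlyu
  have hround : phi u w (F, z) = (F', y) := by
    simp only [phi]
    rw [hins, hdiru, hTyF]
  -- weights
  have hzFn : s(w, z) ∉ F := Finset.notMem_erase _ _
  have hwtT1 : wt c T = c s(w, y) * wt c F' := by
    rw [hTdef, wt, Finset.prod_insert hyF']; rfl
  have hwtT2 : wt c T = c s(w, z) * wt c F := by
    conv_lhs => rw [← hins]
    rw [wt, Finset.prod_insert hzFn]; rfl
  refine ⟨?_, ?_, ?_, ?_, ?_, ?_⟩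
  · rw [hphi]; exact hSF
  · rw [hphi]; exact hbuF
  · rw [hphi]; exact hbwF
  · rw [hphi]; exact hbzF
  · rw [hphi]; exact hround
  · rw [hphi]
    have : c s(w, z) * wt c F = c s(w, y) * wt c F' := by rw [← hwtT2, ← hwtT1]
    dsimp only
    linarith [this]

/-- `S_{u,y}`: weighted sum of 2SFs whose floating component contains `u` and `y`. -/
def Sfun (c : Sym2 V → ℝ) (b u y : V) : ℝ :=
  ∑ B ∈ Finset.univ.filter (fun B => IsSF 2 B ∧ ¬ Linked B b u ∧ ¬ Linked B b y), wt c B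

lemma Sfun_b (c : Sym2 V → ℝ) (b u : V) : Sfun c b u b = 0 := by
  rw [Sfun]
  have : (Finset.univ.filter
      (fun B : Finset (Sym2 V) => IsSF 2 B ∧ ¬ Linked B b u ∧ ¬ Linked B b b)) = ∅ := by
    rw [Finset.filter_eq_empty_iff]
    rintro B - ⟨-, -, h⟩
    exact h (linked_refl B b)
  rw [this, Finset.sum_empty]

def psum (c : Sym2 V → ℝ) (w : V) (P : Finset (Sym2 V) × V → Prop) : ℝ :=
  ∑ p ∈ Finset.univ.filter P, wt c p.1 * c s(w, p.2)

lemma psum_ite (c : Sym2 V → ℝ) (w : V) (P : Finset (Sym2 V) × V → Prop) :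
    psum c w P = ∑ p : Finset (Sym2 V) × V, if P p then wt c p.1 * c s(w, p.2) else 0 := by
  unfold psum
  rw [Finset.sum_filter]

lemma psum_split (c : Sym2 V → ℝ) (w : V) (P Q : Finset (Sym2 V) × V → Prop) :
    psum c w P = psum c w (fun p => P p ∧ Q p) + psum c w (fun p => P p ∧ ¬ Q p) := by
  rw [psum_ite, psum_ite, psum_ite, ← Finset.sum_add_distrib]
  refine Finset.sum_congr rfl fun p _ => ?_
  by_cases h1 : P p <;> by_cases h2 : Q p <;> simp [h1, h2]

lemma psum_congr (c : Sym2 V → ℝ) (w : V) {P Q : Finset (Sym2 V) × V → Prop}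
    (h : ∀ p, P p ↔ Q p) : psum c w P = psum c w Q := by
  rw [psum_ite, psum_ite]
  refine Finset.sum_congr rfl fun p _ => ?_
  by_cases h1 : P p
  · rw [if_pos h1, if_pos ((h p).mp h1)]
  · rw [if_neg h1, if_neg (fun hq => h1 ((h p).mpr hq))]

lemma sfun_psum (c : Sym2 V → ℝ) (b u w : V) :
    ∑ z : V, c s(w, z) * Sfun c b u z
      = psum c w (fun p => IsSF 2 p.1 ∧ ¬ Linked p.1 b u ∧ ¬ Linked p.1 b p.2) := by
  rw [psum_ite, Fintype.sum_prod_type_right]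
  refine Finset.sum_congr rfl fun z _ => ?_
  rw [Sfun, Finset.sum_filter, Finset.mul_sum]
  refine Finset.sum_congr rfl fun B _ => ?_
  by_cases h : IsSF 2 B ∧ ¬ Linked B b u ∧ ¬ Linked B b z
  · rw [if_pos h, if_pos h]; ring
  · rw [if_neg h, if_neg h, mul_zero]

lemma sfun_psum_const (c : Sym2 V → ℝ) (b u w : V) :
    (∑ z : V, c s(w, z)) * Sfun c b u w
      = psum c w (fun p => IsSF 2 p.1 ∧ ¬ Linked p.1 b u ∧ ¬ Linked p.1 b w) := by
  rw [psum_ite, Fintype.sum_prod_type_right, Finset.sum_mul]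
  refine Finset.sum_congr rfl fun z _ => ?_
  rw [Sfun, Finset.sum_filter, Finset.mul_sum]
  refine Finset.sum_congr rfl fun B _ => ?_
  by_cases h : IsSF 2 B ∧ ¬ Linked B b u ∧ ¬ Linked B b w
  · rw [if_pos h, if_pos h]; ring
  · rw [if_neg h, if_neg h, mul_zero]

lemma AB_eq (c : Sym2 V → ℝ) {b u w : V} (hub : u ≠ b) (hwb : w ≠ b) (hwu : w ≠ u) :
    psum c w (fun p => (IsSF 2 p.1 ∧ ¬ Linked p.1 b u ∧ ¬ Linked p.1 b w) ∧ Linked p.1 b p.2)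
      = psum c w (fun p =>
          (IsSF 2 p.1 ∧ ¬ Linked p.1 b u ∧ ¬ Linked p.1 b p.2) ∧ Linked p.1 b w) := by
  unfold psum
  apply Finset.sum_nbij' (i := phi u w) (j := phi b w)
  · rintro ⟨F, z⟩ hp
    simp only [Finset.mem_filter, Finset.mem_univ, true_and] at hp ⊢
    obtain ⟨⟨h1, h2, h3⟩, h4⟩ := hp
    obtain ⟨s1, s2, s3, s4, -, -⟩ := stepA c hub hwb hwu h1 h2 h3 h4
    exact ⟨⟨s1, s2, s3⟩, s4⟩
  · rintro ⟨F, y⟩ hp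
    simp only [Finset.mem_filter, Finset.mem_univ, true_and] at hp ⊢
    obtain ⟨⟨h1, h2, h3⟩, h4⟩ := hp
    obtain ⟨s1, s2, s3, s4, -, -⟩ := stepB c hub hwb hwu h1 h2 h3 h4
    exact ⟨⟨s1, s2, s3⟩, s4⟩
  · rintro ⟨F, z⟩ hp
    simp only [Finset.mem_filter, Finset.mem_univ, true_and] at hp
    obtain ⟨⟨h1, h2, h3⟩, h4⟩ := hp
    exact (stepA c hub hwb hwu h1 h2 h3 h4).2.2.2.2.1
  · rintro ⟨F, y⟩ hp
    simp only [Finset.mem_filter, Finset.mem_univ, true_and] at hp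
    obtain ⟨⟨h1, h2, h3⟩, h4⟩ := hp
    exact (stepB c hub hwb hwu h1 h2 h3 h4).2.2.2.2.1
  · rintro ⟨F, z⟩ hp
    simp only [Finset.mem_filter, Finset.mem_univ, true_and] at hp
    obtain ⟨⟨h1, h2, h3⟩, h4⟩ := hp
    exact ((stepA c hub hwb hwu h1 h2 h3 h4).2.2.2.2.2).symm

lemma harmonic (c : Sym2 V → ℝ) {b u w : V} (hub : u ≠ b) (hwb : w ≠ b) (hwu : w ≠ u) :
    ∑ z : V, c s(w, z) * Sfun c b u z = (∑ z : V, c s(w, z)) * Sfun c b u w := by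
  have h1 := psum_split c w
    (fun p => IsSF 2 p.1 ∧ ¬ Linked p.1 b u ∧ ¬ Linked p.1 b p.2)
    (fun p => Linked p.1 b w)
  have h2 := psum_split c w
    (fun p => IsSF 2 p.1 ∧ ¬ Linked p.1 b u ∧ ¬ Linked p.1 b w)
    (fun p => Linked p.1 b p.2)
  beta_reduce at h1 h2
  have h3 := psum_congr c w
    (P := fun p => (IsSF 2 p.1 ∧ ¬ Linked p.1 b u ∧ ¬ Linked p.1 b p.2) ∧ ¬ Linked p.1 b w)
    (Q := fun p => (IsSF 2 p.1 ∧ ¬ Linked p.1 b u ∧ ¬ Linked p.1 b w) ∧ ¬ Linked p.1 b p.2)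
    (fun p => by tauto)
  have h4 := AB_eq c hub hwb hwu
  rw [sfun_psum, sfun_psum_const]
  linarith [h1, h2, h3, h4]

open Matrix in
private lemma _root_.TwoSF.notation_probe (M : Matrix (Fin 2) (Fin 2) ℝ) (v : Fin 2 → ℝ) : M *ᵥ v = M.mulVec v := rfl

open Matrix

/-- Extension of a vector on `V ∖ {b}` by zero at `b`. -/
def ext (b : V) (x : {w : V // w ≠ b} → ℝ) : V → ℝ := fun v => if h : v = b then 0 else x ⟨v, h⟩

lemma ext_apply {b : V} (x : {w : V // w ≠ b} → ℝ) (p : {w : V // w ≠ b}) :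
    ext b x p.1 = x p := by
  rw [ext, dif_neg p.2]

lemma ext_b {b : V} (x : {w : V // w ≠ b} → ℝ) : ext b x b = 0 := by
  rw [ext, dif_pos rfl]

lemma dlap_mulVec (c : Sym2 V → ℝ) (hloop : ∀ v : V, c s(v, v) = 0) (b : V)
    (x : {w : V // w ≠ b} → ℝ) (p : {w : V // w ≠ b}) :
    (dlap c b *ᵥ x) p = (∑ z : V, c s(p.1, z)) * x p - ∑ z : V, c s(p.1, z) * ext b x z := by
  have hsum : (dlap c b *ᵥ x) p = ∑ q : {w : V // w ≠ b}, lap c p.1 q.1 * x q := by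
    simp [Matrix.mulVec, dotProduct, dlap]
  have hsub : ∑ q : {w : V // w ≠ b}, lap c p.1 q.1 * x q
      = ∑ v ∈ Finset.univ.erase b, lap c p.1 v * ext b x v := by
    have e2 := Finset.sum_subtype (p := fun w : V => w ≠ b) (F := inferInstance) (Finset.univ.erase b)
      (fun v => by simp) (fun v => lap c p.1 v * ext b x v)
    rw [e2]
    refine Finset.sum_congr rfl fun q _ => ?_
    rw [ext_apply]
  have herase : ∑ v ∈ Finset.univ.erase b, lap c p.1 v * ext b x v
      = ∑ v : V, lap c p.1 v * ext b x v := by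
    have h0 := Finset.sum_erase_add Finset.univ (fun v => lap c p.1 v * ext b x v)
      (Finset.mem_univ b)
    simp only [ext_b, mul_zero, add_zero] at h0
    exact h0
  have hdiag : lap c p.1 p.1 = ∑ z : V, c s(p.1, z) := by
    have h0 := Finset.sum_erase_add Finset.univ (fun z => c s(p.1, z)) (Finset.mem_univ p.1)
    simp only [hloop p.1, add_zero] at h0
    rw [lap, if_pos rfl, Finset.filter_ne']
    exact h0
  have hmain : ∑ v : V, lap c p.1 v * ext b x v
      = (∑ z : V, c s(p.1, z)) * x p - ∑ z : V, c s(p.1, z) * ext b x z := by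
    have h1 := (Finset.sum_erase_add Finset.univ (fun v => lap c p.1 v * ext b x v)
      (Finset.mem_univ p.1)).symm
    have h2 : ∀ v ∈ Finset.univ.erase p.1,
        lap c p.1 v * ext b x v = -(c s(p.1, v) * ext b x v) := by
      intro v hv
      rw [lap, if_neg (fun hcp => (Finset.ne_of_mem_erase hv) hcp.symm)]
      ring
    have h3 := Finset.sum_erase_add Finset.univ (fun v => c s(p.1, v) * ext b x v)
      (Finset.mem_univ p.1)
    simp only [hloop p.1, zero_mul, add_zero] at h3
    rw [h1, Finset.sum_congr rfl h2, Finset.sum_neg_distrib, h3, hdiag, ext_apply]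
    ring
  rw [hsum, hsub, herase, hmain]

lemma dlap_inj (c : Sym2 V → ℝ) (hc : ∀ e, 0 ≤ c e) (hloop : ∀ v : V, c s(v, v) = 0)
    (hconn : ncomp (Finset.univ.filter fun e : Sym2 V => c e ≠ 0) = 1) (b : V)
    (x : {w : V // w ≠ b} → ℝ) (hx : dlap c b *ᵥ x = 0) : x = 0 := by
  set y := ext b x with hy
  have rows : ∀ p : {w : V // w ≠ b},
      (∑ z : V, c s(p.1, z)) * x p - ∑ z : V, c s(p.1, z) * y z = 0 := by
    intro p
    rw [← dlap_mulVec c hloop b x p, hx]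
    rfl
  have rowsy : ∀ v : V, y v * (∑ z : V, c s(v, z) * (y v - y z)) = 0 := by
    intro v
    by_cases hvb : v = b
    · rw [hvb, hy, ext_b, zero_mul]
    · have hr := rows ⟨v, hvb⟩
      have hyx : y v = x ⟨v, hvb⟩ := ext_apply x ⟨v, hvb⟩
      have hexp : ∑ z : V, c s(v, z) * (y v - y z)
          = (∑ z : V, c s(v, z)) * y v - ∑ z : V, c s(v, z) * y z := by
        rw [Finset.sum_mul, ← Finset.sum_sub_distrib]
        exact Finset.sum_congr rfl fun z _ => by ring
      rw [hexp, hyx, hr, mul_zero]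
  have swap : ∑ v : V, ∑ z : V, c s(v, z) * (y z * (y z - y v))
      = ∑ v : V, ∑ z : V, c s(v, z) * (y v * (y v - y z)) := by
    rw [Finset.sum_comm]
    refine Finset.sum_congr rfl fun v _ => Finset.sum_congr rfl fun z _ => ?_
    rw [Sym2.eq_swap]
  have inner1 : ∀ v : V, ∑ z : V, c s(v, z) * (y v * (y v - y z)) = 0 := by
    intro v
    have hpull : ∑ z : V, c s(v, z) * (y v * (y v - y z))
        = y v * ∑ z : V, c s(v, z) * (y v - y z) := by
      rw [Finset.mul_sum]
      exact Finset.sum_congr rfl fun z _ => by ring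
    rw [hpull]
    exact rowsy v
  have hqzero : ∑ v : V, ∑ z : V, c s(v, z) * (y v - y z) ^ 2 = 0 := by
    have step1 : ∑ v : V, ∑ z : V, c s(v, z) * (y v - y z) ^ 2
        = (∑ v : V, ∑ z : V, c s(v, z) * (y v * (y v - y z)))
          + ∑ v : V, ∑ z : V, c s(v, z) * (y z * (y z - y v)) := by
      rw [← Finset.sum_add_distrib]
      refine Finset.sum_congr rfl fun v _ => ?_
      rw [← Finset.sum_add_distrib]
      exact Finset.sum_congr rfl fun z _ => by ring
    rw [step1, swap]
    simp [inner1]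
  have hterm : ∀ v z : V, c s(v, z) ≠ 0 → y v = y z := by
    intro v z hcnz
    have h1 : ∀ v0 ∈ (Finset.univ : Finset V),
        0 ≤ ∑ z0 : V, c s(v0, z0) * (y v0 - y z0) ^ 2 :=
      fun v0 _ => Finset.sum_nonneg fun z0 _ => mul_nonneg (hc _) (sq_nonneg _)
    have h2 := (Finset.sum_eq_zero_iff_of_nonneg h1).mp hqzero v (Finset.mem_univ v)
    have h3 := (Finset.sum_eq_zero_iff_of_nonneg
      (fun z0 _ => mul_nonneg (hc _) (sq_nonneg _))).mp h2 z (Finset.mem_univ z)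
    rcases mul_eq_zero.mp h3 with h | h
    · exact absurd h hcnz
    · have := sq_eq_zero_iff.mp h
      linarith [this]
  have hprop : ∀ a d : V,
      Linked (Finset.univ.filter fun e : Sym2 V => c e ≠ 0) a d → y a = y d := by
    intro a d h
    induction h with
    | refl => rfl
    | @tail m n _ hstep ih =>
      have hcmn : c s(m, n) ≠ 0 := (Finset.mem_filter.mp hstep).2
      exact ih.trans (hterm m n hcmn)
  have hyzero : ∀ v : V, y v = 0 := by
    intro v
    have := hprop b v (ncomp_eq_one_linked hconn b v)
    rw [← this, hy, ext_b]
  funext p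
  have h := hyzero p.1
  rw [hy, ext_apply] at h
  simpa using h

lemma dlap_det_ne (c : Sym2 V → ℝ) (hc : ∀ e, 0 ≤ c e) (hloop : ∀ v : V, c s(v, v) = 0)
    (hconn : ncomp (Finset.univ.filter fun e : Sym2 V => c e ≠ 0) = 1) (b : V) :
    (dlap c b).det ≠ 0 := by
  intro h0
  obtain ⟨vv, hvne, hv0⟩ := (Matrix.exists_mulVec_eq_zero_iff).mpr h0
  exact hvne (dlap_inj c hc hloop hconn b vv hv0)

lemma dlap_transpose (c : Sym2 V → ℝ) (b : V) : (dlap c b)ᵀ = dlap c b := by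
  ext p q
  simp only [Matrix.transpose_apply, dlap, Matrix.of_apply, lap]
  by_cases h : p.1 = q.1
  · rw [h]
  · rw [if_neg (fun hcp => h hcp.symm), if_neg h, Sym2.eq_swap]

lemma dlapinv_symm (c : Sym2 V → ℝ) (b : V) (p q : {w : V // w ≠ b}) :
    (dlap c b)⁻¹ p q = (dlap c b)⁻¹ q p := by
  have h := Matrix.transpose_nonsing_inv (dlap c b)
  rw [dlap_transpose] at h
  conv_lhs => rw [← h]
  rfl

lemma sfun_eq_green (c : Sym2 V → ℝ) (hc : ∀ e, 0 ≤ c e) (hloop : ∀ v : V, c s(v, v) = 0)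
    (hconn : ncomp (Finset.univ.filter fun e : Sym2 V => c e ≠ 0) = 1) {b u : V}
    (hu : u ≠ b) :
    ∃ K : ℝ, ∀ p : {w : V // w ≠ b}, Sfun c b u p.1 = K * (dlap c b)⁻¹ p ⟨u, hu⟩ := by
  classical
  set g : {w : V // w ≠ b} → ℝ := fun p => Sfun c b u p.1 with hg
  set h := dlap c b *ᵥ g with hh
  have hdet : IsUnit (dlap c b).det :=
    isUnit_iff_ne_zero.mpr (dlap_det_ne c hc hloop hconn b)
  have hzero : ∀ q : {w : V // w ≠ b}, q ≠ ⟨u, hu⟩ → h q = 0 := by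
    intro q hq
    have hqu : q.1 ≠ u := fun hcq => hq (Subtype.ext hcq)
    rw [hh, dlap_mulVec c hloop b g q]
    have hext : ∀ z : V, ext b g z = Sfun c b u z := by
      intro z
      by_cases hz : z = b
      · rw [hz, ext_b, Sfun_b]
      · exact ext_apply g ⟨z, hz⟩
    have hrw : ∑ z : V, c s(q.1, z) * ext b g z = ∑ z : V, c s(q.1, z) * Sfun c b u z :=
      Finset.sum_congr rfl fun z _ => by rw [hext z]
    rw [hrw, harmonic c hu q.2 hqu]
    exact sub_eq_zero.mpr rfl
  have hginv : g = (dlap c b)⁻¹ *ᵥ h := by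
    rw [hh, Matrix.mulVec_mulVec, Matrix.nonsing_inv_mul _ hdet, Matrix.one_mulVec]
  refine ⟨h ⟨u, hu⟩, fun p => ?_⟩
  have hgp : g p = ∑ q : {w : V // w ≠ b}, (dlap c b)⁻¹ p q * h q := by
    rw [hginv]
    simp [Matrix.mulVec, dotProduct]
  have hsingle : ∑ q : {w : V // w ≠ b}, (dlap c b)⁻¹ p q * h q
      = (dlap c b)⁻¹ p ⟨u, hu⟩ * h ⟨u, hu⟩ :=
    Finset.sum_eq_single (⟨u, hu⟩ : {w : V // w ≠ b}) (fun q _ hq => by rw [hzero q hq, mul_zero])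
      (fun hmem => absurd (Finset.mem_univ _) hmem)
  have : Sfun c b u p.1 = g p := rfl
  rw [this, hgp, hsingle]
  ring

end TwoSF

open TwoSF

/-- For a finite connected undirected graph with positive
conductances and marked vertex `b`, and vertices `u, v ≠ b`, the conditional
probability that `v` lies in the floating component `Σ` given that `u` does
equals `G_{u,v} / G_{u,u}`. -/
theorem statement_5 {V : Type*} [Fintype V] [DecidableEq V] (c : Sym2 V → ℝ)
    (hc : ∀ e, 0 ≤ c e) (hloop : ∀ v : V, c s(v, v) = 0)
    (hconn : ncomp (Finset.univ.filter fun e : Sym2 V => c e ≠ 0) = 1)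
    (b u v : V) (hu : u ≠ b) (hv : v ≠ b) :
    pr2 c (fun B => u ∈ floating b B ∧ v ∈ floating b B) /
        pr2 c (fun B => u ∈ floating b B) =
      green c b u v / green c b u u := by
  classical
  obtain ⟨F0, hF0sub, hF0sf, hF0nl⟩ := exists_good_2sf _ hconn hu
  have hwt0 : 0 < wt c F0 := wt_pos hc hF0sub
  have hk2 : 0 < kappa2 c := by
    rw [kappa2]
    exact Finset.sum_pos' (fun B _ => wt_nonneg hc B)
      ⟨F0, Finset.mem_filter.mpr ⟨Finset.mem_univ _, hF0sf⟩, hwt0⟩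
  have hSuu : 0 < Sfun c b u u := by
    rw [Sfun]
    exact Finset.sum_pos' (fun B _ => wt_nonneg hc B)
      ⟨F0, Finset.mem_filter.mpr ⟨Finset.mem_univ _, hF0sf, hF0nl, hF0nl⟩, hwt0⟩
  have hpr1 : pr2 c (fun B => u ∈ floating b B ∧ v ∈ floating b B)
      = Sfun c b u v / kappa2 c := by
    rw [pr2, Sfun]
    congr 1
    rw [Finset.sum_filter, Finset.sum_filter]
    refine Finset.sum_congr rfl fun B _ => ?_
    have hiff : (IsSF 2 B ∧ (u ∈ floating b B ∧ v ∈ floating b B))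
        ↔ (IsSF 2 B ∧ ¬ Linked B b u ∧ ¬ Linked B b v) := by
      simp [floating]
    by_cases hB : IsSF 2 B ∧ (u ∈ floating b B ∧ v ∈ floating b B)
    · rw [if_pos hB, if_pos (hiff.mp hB)]
    · rw [if_neg hB, if_neg (fun hq => hB (hiff.mpr hq))]
  have hpr2' : pr2 c (fun B => u ∈ floating b B) = Sfun c b u u / kappa2 c := by
    rw [pr2, Sfun]
    congr 1
    rw [Finset.sum_filter, Finset.sum_filter]
    refine Finset.sum_congr rfl fun B _ => ?_
    have hiff : (IsSF 2 B ∧ u ∈ floating b B)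
        ↔ (IsSF 2 B ∧ ¬ Linked B b u ∧ ¬ Linked B b u) := by
      simp [floating]
    by_cases hB : IsSF 2 B ∧ u ∈ floating b B
    · rw [if_pos hB, if_pos (hiff.mp hB)]
    · rw [if_neg hB, if_neg (fun hq => hB (hiff.mpr hq))]
  obtain ⟨K, hK⟩ := sfun_eq_green c hc hloop hconn hu
  have hv' : Sfun c b u v = K * (dlap c b)⁻¹ ⟨v, hv⟩ ⟨u, hu⟩ := hK ⟨v, hv⟩
  have hu' : Sfun c b u u = K * (dlap c b)⁻¹ ⟨u, hu⟩ ⟨u, hu⟩ := hK ⟨u, hu⟩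
  have hgv : green c b u v = (dlap c b)⁻¹ ⟨v, hv⟩ ⟨u, hu⟩ := by
    rw [green, dif_neg hu, dif_neg hv, dlapinv_symm]
  have hgu : green c b u u = (dlap c b)⁻¹ ⟨u, hu⟩ ⟨u, hu⟩ := by
    rw [green, dif_neg hu, dif_neg hu]
  have hprod : K * (dlap c b)⁻¹ ⟨u, hu⟩ ⟨u, hu⟩ ≠ 0 := by
    rw [← hu']
    exact ne_of_gt hSuu
  have hKne : K ≠ 0 := left_ne_zero_of_mul hprod
  have hYne : (dlap c b)⁻¹ ⟨u, hu⟩ ⟨u, hu⟩ ≠ 0 := right_ne_zero_of_mul hprod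
  have hk2ne : kappa2 c ≠ 0 := ne_of_gt hk2
  rw [hpr1, hpr2', hgv, hgu, hv', hu']
  rw [div_div_div_cancel_right₀]
  · rw [mul_div_mul_left _ _ hKne]
  · exact hk2ne
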